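/- Let V be a finite-dimensional vector space over a field k, let g : V → V be an invertible linear map, and suppose the characteristic polynomial of g splits over k. Then there exists a polynomial p ∈ k[X] with p(0) = 0 such that t := p(g) is diagonalizable, u := t⁻¹ g is unipotent (i.e., u − 1 is nilpotent), t is invertible, and t and u commute. Moreover t acts on each generalized eigenspace of g for an eigenvalue a as multiplication by a. -/

import Mathlib

open Polynomial Module

private lemma crt_aux' {k : Type*} [Field k] (N : ℕ) (s : Finset k) (c : k → k) :
    ∃ p : k[X], ∀ a ∈ s, (X - C a) ^ N ∣ p - C (c a) := by
  classical
  have hcop : Pairwise (Function.onFun IsCoprime fun a : ↥s =>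
      Ideal.span {((X - C (a : k)) ^ N : k[X])}) := by
    intro a b hab
    rw [Function.onFun, Ideal.isCoprime_span_singleton_iff]
    exact (Polynomial.pairwise_coprime_X_sub_C Subtype.val_injective hab).pow
  obtain ⟨p, hp⟩ := Ideal.quotientInfToPiQuotient_surj hcop
    (fun a => Ideal.Quotient.mk _ (C (c a.val)))
  obtain ⟨p, rfl⟩ := Ideal.Quotient.mk_surjective p
  refine ⟨p, fun a ha => ?_⟩
  have := congr_fun hp ⟨a, ha⟩
  rw [Ideal.quotientInfToPiQuotient_mk'] at this
  rw [← Ideal.mem_span_singleton]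
  exact (Ideal.Quotient.eq).mp this

private lemma kerprod_aux' {k V : Type*} [Field k] [AddCommGroup V] [Module k V]
    (f : Module.End k V) (N : ℕ) (s : Finset k) :
    LinearMap.ker (aeval f (∏ a ∈ s, (X - C a) ^ N)) =
      ⨆ a ∈ s, LinearMap.ker (aeval f ((X - C a) ^ N)) := by
  classical
  induction s using Finset.induction_on with
  | empty => simp [LinearMap.ker_eq_bot, Module.End.one_eq_id]
  | @insert a s ha ih =>
    have hcop : IsCoprime ((X - C a) ^ N) (∏ b ∈ s, (X - C b) ^ N) :=
      IsCoprime.prod_right fun b hb =>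
        (Polynomial.pairwise_coprime_X_sub_C Function.injective_id
          (fun h : a = b => ha (h ▸ hb))).pow
    rw [Finset.prod_insert ha, ← Polynomial.sup_ker_aeval_eq_ker_aeval_mul_of_coprime f hcop,
      ih, Finset.iSup_insert]

theorem stmt_7 {k V : Type*} [Field k] [AddCommGroup V] [Module k V]
    [FiniteDimensional k V] (g : Module.End k V) (hg : IsUnit g)
    (hsplit : (LinearMap.charpoly g).Splits) :
    ∃ (p : Polynomial k) (t u : Module.End k V),
      p.coeff 0 = 0 ∧
      t = Polynomial.aeval g p ∧
      g = t * u ∧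
      IsUnit t ∧
      Commute t u ∧
      (⨆ μ : k, Module.End.eigenspace t μ) = ⊤ ∧
      IsNilpotent (u - 1) ∧
      (∀ a : k, ∀ x ∈ LinearMap.ker ((g - a • (1 : Module.End k V)) ^ Module.finrank k V),
        t x = a • x) := by
  classical
  rcases subsingleton_or_nontrivial V with hV | hV
  · have hsub : Subsingleton (Module.End k V) :=
      ⟨fun _ _ => LinearMap.ext fun x => Subsingleton.elim _ _⟩
    refine ⟨0, 0, 1, by simp, (map_zero _).symm, Subsingleton.elim _ _,
      (Subsingleton.elim (1 : Module.End k V) 0) ▸ isUnit_one, Commute.one_right _, ?_,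
      by simp, fun a x _ => Subsingleton.elim _ _⟩
    exact eq_top_iff.mpr fun x _ => by
      rw [Subsingleton.elim x 0]; exact Submodule.zero_mem _
  set N := Module.finrank k V with hNdef
  have hN : 0 < N := Module.finrank_pos
  set χ := LinearMap.charpoly g with hχ
  have hmonic : χ.Monic := g.charpoly_monic
  set S : Finset k := χ.roots.toFinset with hSdef
  have h0 : (0 : k) ∉ S := by
    intro h
    have hroot : χ.IsRoot 0 :=
      (Polynomial.mem_roots hmonic.ne_zero).mp (Multiset.mem_toFinset.mp h)
    have hdet := LinearMap.isUnit_det g hg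
    rw [LinearMap.det_eq_sign_charpoly_coeff] at hdet
    rw [show χ.coeff 0 = 0 by rwa [Polynomial.coeff_zero_eq_eval_zero]] at hdet
    simp at hdet
  obtain ⟨p, hp⟩ := crt_aux' N (insert 0 S) id
  obtain ⟨q, hq⟩ := crt_aux' N (insert 0 S) (fun a => a⁻¹)
  set t : Module.End k V := aeval g p with ht
  set t' : Module.End k V := aeval g q with ht'
  have haev : ∀ a : k, aeval g ((X - C a) ^ N) = (g - a • 1) ^ N := by
    intro a
    rw [map_pow, map_sub, aeval_X, aeval_C, Module.algebraMap_end_eq_smul_id]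
    rfl
  -- p has zero constant term
  have hp0 : p.coeff 0 = 0 := by
    rw [← Polynomial.X_dvd_iff]
    have := hp 0 (Finset.mem_insert_self _ _)
    simp only [id, map_zero, C_0, sub_zero] at this
    exact dvd_trans (dvd_pow_self X hN.ne') this
  -- t acts as a on each generalized eigenspace
  have hact : ∀ a : k, ∀ x ∈ LinearMap.ker ((g - a • (1 : Module.End k V)) ^ N),
      t x = a • x := by
    intro a x hx
    by_cases ha : a ∈ insert 0 S
    · obtain ⟨c, hc⟩ := hp a ha
      simp only [id] at hc
      have h2 : (aeval g (p - C a)) x = 0 := by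
        rw [show p - C a = c * (X - C a) ^ N by rw [hc]; ring, map_mul, Module.End.mul_apply,
          haev, LinearMap.mem_ker.mp hx, map_zero]
      rw [map_sub, aeval_C, Module.algebraMap_end_eq_smul_id] at h2
      have h3 : t x - a • x = 0 := by
        simpa [LinearMap.sub_apply] using h2
      exact sub_eq_zero.mp h3
    · have hx0 : x = 0 := by
        by_contra hxne
        have hgen : g.HasGenEigenvalue a N := by
          rw [Module.End.hasGenEigenvalue_iff, Module.End.genEigenspace_nat]
          exact fun hbot => hxne (by simpa [hbot] using hx)
        have heig := Module.End.hasEigenvalue_of_hasGenEigenvalue hgen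
        have hroot : (minpoly k g).IsRoot a := Module.End.hasEigenvalue_iff_isRoot.mp heig
        have hrootχ : χ.IsRoot a := hroot.dvd (LinearMap.minpoly_dvd_charpoly g)
        exact ha (Finset.mem_insert_of_mem (Multiset.mem_toFinset.mpr
          ((Polynomial.mem_roots hmonic.ne_zero).mpr hrootχ)))
      simp [hx0]
  -- the product polynomial
  set P : k[X] := ∏ a ∈ S, (X - C a) ^ N with hPdef
  have hdvdP : χ ∣ P := by
    have h1 : χ = (χ.roots.map fun a => X - C a).prod :=
      hsplit.eq_prod_roots_of_monic hmonic
    have h2 : (χ.roots.map fun a => X - C a).prod =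
        ∏ a ∈ S, (X - C a) ^ χ.roots.count a :=
      Finset.prod_multiset_map_count _ _
    rw [h1, h2]
    refine Finset.prod_dvd_prod_of_dvd _ _ fun a _ => pow_dvd_pow _ ?_
    refine le_trans (Multiset.count_le_card _ _) (le_trans χ.card_roots' ?_)
    rw [hχ, g.charpoly_natDegree]
  have hPzero : aeval g P = 0 := by
    obtain ⟨c, hc⟩ := hdvdP
    rw [hc, map_mul, LinearMap.aeval_self_charpoly, zero_mul]
  -- P divides p*q - 1
  have hPdvd1 : P ∣ p * q - 1 := by
    refine Finset.prod_dvd_of_coprime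
      (fun a ha b hb hab => (Polynomial.pairwise_coprime_X_sub_C Function.injective_id hab).pow)
      (fun a ha => ?_)
    have ha0 : a ≠ 0 := fun h => h0 (h ▸ ha)
    have hone : (C a) * (C a⁻¹) = 1 := by rw [← C_mul, mul_inv_cancel₀ ha0, C_1]
    have hsplit2 : p * q - 1 = (p - C a) * q + C a * (q - C a⁻¹) := by
      linear_combination hone
    rw [hsplit2]
    exact dvd_add ((hp a (Finset.mem_insert_of_mem ha)).mul_right q)
      ((hq a (Finset.mem_insert_of_mem ha)).mul_left _)
  have htt' : t * t' = 1 := by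
    obtain ⟨c, hc⟩ := hPdvd1
    have h1 : aeval g (p * q - 1) = 0 := by rw [hc, map_mul, hPzero, zero_mul]
    rw [map_sub, map_mul, map_one, sub_eq_zero] at h1
    exact h1
  have ht't : t' * t = 1 := by
    rw [((Commute.all q p).map (aeval g : k[X] →ₐ[k] Module.End k V)).eq]
    exact htt'
  have hunit : IsUnit t := ⟨⟨t, t', htt', ht't⟩, rfl⟩
  set u : Module.End k V := t' * g with hu
  have hgu : g = t * u := by rw [hu, ← mul_assoc, htt', one_mul]
  have hcomm_tt' : Commute t t' := (Commute.all p q).map (aeval g : k[X] →ₐ[k] Module.End k V)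
  have hcomm_tg : Commute t g := by
    have := (Commute.all p X).map (aeval g : k[X] →ₐ[k] Module.End k V)
    rwa [aeval_X] at this
  have hcomm_t'g : Commute t' g := by
    have := (Commute.all q X).map (aeval g : k[X] →ₐ[k] Module.End k V)
    rwa [aeval_X] at this
  have hcomm : Commute t u := hcomm_tt'.mul_right hcomm_tg
  -- top decomposition
  have hTop : (⊤ : Submodule k V) = ⨆ a ∈ S, LinearMap.ker ((g - a • (1 : Module.End k V)) ^ N) := by
    have h := kerprod_aux' g N S
    rw [hPzero] at h
    simp only [haev] at h
    rw [← h, LinearMap.ker_zero]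
  -- diagonalizability of t
  have hsupEig : (⨆ μ : k, Module.End.eigenspace t μ) = ⊤ := by
    rw [eq_top_iff]
    refine le_trans (le_of_eq hTop) (iSup₂_le fun a _ => ?_)
    refine le_trans ?_ (le_iSup (fun μ => Module.End.eigenspace t μ) a)
    intro x hx
    rw [Module.End.mem_eigenspace_iff]
    exact hact a x hx
  -- nilpotency
  have hgt : (g - t) ^ N = 0 := by
    have hker : ∀ a ∈ S, LinearMap.ker ((g - a • (1 : Module.End k V)) ^ N) ≤
        LinearMap.ker ((g - t) ^ N) := by
      intro a _
      have key : ∀ j : ℕ, ∀ x ∈ LinearMap.ker ((g - a • (1 : Module.End k V)) ^ N),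
          ((g - t) ^ j) x = ((g - a • (1 : Module.End k V)) ^ j) x := by
        intro j
        induction j with
        | zero => intro x _; simp
        | succ j ih =>
          intro x hx
          have hgx : (g - a • (1 : Module.End k V)) x ∈
              LinearMap.ker ((g - a • (1 : Module.End k V)) ^ N) := by
            rw [LinearMap.mem_ker] at hx ⊢
            rw [← Module.End.mul_apply, ← pow_succ, pow_succ', Module.End.mul_apply, hx, map_zero]
          have hstep : (g - t) x = (g - a • (1 : Module.End k V)) x := by
            simp [LinearMap.sub_apply, hact a x hx]
          rw [pow_succ, pow_succ, Module.End.mul_apply, Module.End.mul_apply, hstep, ih _ hgx]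
      intro x hx
      rw [LinearMap.mem_ker, key N x hx]
      exact LinearMap.mem_ker.mp hx
    have htop : (⊤ : Submodule k V) ≤ LinearMap.ker ((g - t) ^ N) :=
      le_trans (le_of_eq hTop) (iSup₂_le hker)
    exact LinearMap.ker_eq_top.mp (top_unique htop)
  have hu1 : u - 1 = t' * (g - t) := by rw [mul_sub, ht't, hu]
  have hcomm' : Commute t' (g - t) := hcomm_t'g.sub_right hcomm_tt'.symm
  have hnil : IsNilpotent (u - 1) := ⟨N, by rw [hu1, hcomm'.mul_pow, hgt, mul_zero]⟩
  exact ⟨p, t, u, hp0, rfl, hgu, hunit, hcomm, hsupEig, hnil, hact⟩
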